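/- The entropy function U is strictly convex on the set of admissible states of the 2D compressible Euler equations, i.e., the map q ↦ U(q) is strictly convex on the open set {q = (ρ, m₁, m₂, E) ∈ ℝ⁴ : ρ > 0 and (γ−1)(E − (m₁²+m₂²)/(2ρ)) > 0}. -/

import Mathlib

open Real Matrix

noncomputable section

/-- A state of the 2D compressible Euler equations: `(ρ, ρu, ρv, E)`. -/
abbrev EulerState := Fin 4 → ℝ

/-- Density. -/
def rho (q : EulerState) : ℝ := q 0
/-- x-momentum. -/
def mom1 (q : EulerState) : ℝ := q 1
/-- y-momentum. -/
def mom2 (q : EulerState) : ℝ := q 2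
/-- Total energy. -/
def toten (q : EulerState) : ℝ := q 3
/-- Pressure `p = (γ-1)(E - (m₁² + m₂²)/(2ρ))`. -/
def pres (γ : ℝ) (q : EulerState) : ℝ :=
  (γ - 1) * (toten q - (mom1 q ^ 2 + mom2 q ^ 2) / (2 * rho q))
/-- x-velocity `u = m₁/ρ`. -/
def uvel (q : EulerState) : ℝ := mom1 q / rho q
/-- y-velocity `v = m₂/ρ`. -/
def vvel (q : EulerState) : ℝ := mom2 q / rho q
/-- Admissible states: positive density and positive pressure. -/
def admissible (γ : ℝ) (q : EulerState) : Prop := 0 < rho q ∧ 0 < pres γ q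
/-- Physical entropy `s = ln(p ρ^(-γ))`. -/
def entS (γ : ℝ) (q : EulerState) : ℝ := Real.log (pres γ q * rho q ^ (-γ))
/-- Entropy function `U = -ρ s/(γ-1)`. -/
def entU (γ : ℝ) (q : EulerState) : ℝ := -(rho q * entS γ q) / (γ - 1)
/-- `β = ρ/(2p)`. -/
def betaCoef (γ : ℝ) (q : EulerState) : ℝ := rho q / (2 * pres γ q)
/-- Entropy variables `r(q)`. -/
def entVar (γ : ℝ) (q : EulerState) : EulerState :=
  ![(γ - entS γ q) / (γ - 1) - betaCoef γ q * (uvel q ^ 2 + vvel q ^ 2),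
    2 * betaCoef γ q * uvel q,
    2 * betaCoef γ q * vvel q,
    -2 * betaCoef γ q]
/-- x-flux `f(q)`. -/
def fFlux (γ : ℝ) (q : EulerState) : EulerState :=
  ![rho q * uvel q,
    rho q * uvel q ^ 2 + pres γ q,
    rho q * uvel q * vvel q,
    (toten q + pres γ q) * uvel q]
/-- y-flux `g(q)`. -/
def gFlux (γ : ℝ) (q : EulerState) : EulerState :=
  ![rho q * vvel q,
    rho q * uvel q * vvel q,
    rho q * vvel q ^ 2 + pres γ q,
    (toten q + pres γ q) * vvel q]
/-- x-entropy flux `φₓ = -ρ u s/(γ-1)`. -/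
def phiX (γ : ℝ) (q : EulerState) : ℝ := -(rho q * uvel q * entS γ q) / (γ - 1)
/-- y-entropy flux `φ_y = -ρ v s/(γ-1)`. -/
def phiY (γ : ℝ) (q : EulerState) : ℝ := -(rho q * vvel q * entS γ q) / (γ - 1)

/-- Logarithmic mean `(b-a)/(ln b - ln a)`, equal to `a` when `a = b`. -/
def logMean (a b : ℝ) : ℝ := if a = b then a else (b - a) / (Real.log b - Real.log a)

/-- The entropy conservative flux of Chandrashekar. -/
def chandrashekarFlux (γ : ℝ) (qm qp : EulerState) : EulerState :=
  let ρhat := logMean (rho qm) (rho qp)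
  let ubar := (uvel qm + uvel qp) / 2
  let vbar := (vvel qm + vvel qp) / 2
  let βbar := (betaCoef γ qm + betaCoef γ qp) / 2
  let βhat := logMean (betaCoef γ qm) (betaCoef γ qp)
  let ρbar := (rho qm + rho qp) / 2
  let ptil := ρbar / (2 * βbar)
  let vsqbar := (uvel qm ^ 2 + vvel qm ^ 2 + uvel qp ^ 2 + vvel qp ^ 2) / 2
  let Fρ := ρhat * ubar
  let Fρu := ubar * Fρ + ptil
  let Fρv := vbar * Fρ
  ![Fρ, Fρu, Fρv,
    (1 / (2 * (γ - 1) * βhat) - vsqbar / 2) * Fρ + ubar * Fρu + vbar * Fρv]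

/-- Speed of sound `c = √(γ p/ρ)`. -/
def cSound (γ : ℝ) (q : EulerState) : ℝ := Real.sqrt (γ * pres γ q / rho q)
/-- Enthalpy `H = c²/(γ-1) + |v|²/2`. -/
def enthalpyH (γ : ℝ) (q : EulerState) : ℝ :=
  cSound γ q ^ 2 / (γ - 1) + (uvel q ^ 2 + vvel q ^ 2) / 2
/-- The matrix `R` of right eigenvectors of the x-flux Jacobian. -/
def eigMat (γ : ℝ) (q : EulerState) : Matrix (Fin 4) (Fin 4) ℝ :=
  !![1, 1, 0, 1;
     uvel q - cSound γ q, uvel q, 0, uvel q + cSound γ q;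
     vvel q, vvel q, -1, vvel q;
     enthalpyH γ q - cSound γ q * uvel q, (uvel q ^ 2 + vvel q ^ 2) / 2, -vvel q,
       enthalpyH γ q + cSound γ q * uvel q]
/-- Barth's scaling matrix `S = diag(ρ/(2γ), (γ-1)ρ/γ, p, ρ/(2γ))`. -/
def scalMat (γ : ℝ) (q : EulerState) : Matrix (Fin 4) (Fin 4) ℝ :=
  Matrix.diagonal ![rho q / (2 * γ), (γ - 1) * rho q / γ, pres γ q, rho q / (2 * γ)]

/-- Entropy diffusion matrix `Q = R |Λ| S Rᵀ` for a diagonal `|Λ| = diag lam`. -/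
def Qmat (γ : ℝ) (lam : Fin 4 → ℝ) (q : EulerState) : Matrix (Fin 4) (Fin 4) ℝ :=
  eigMat γ q * Matrix.diagonal lam * scalMat γ q * (eigMat γ q)ᵀ

/-- Roe eigenvalues `(|u-c|, |u|, |u|, |u+c|)`. -/
def lamRoe (γ : ℝ) (q : EulerState) : Fin 4 → ℝ :=
  ![|uvel q - cSound γ q|, |uvel q|, |uvel q|, |uvel q + cSound γ q|]
/-- Kinetic energy stable eigenvalues `(|u|+c, |u|, |u|, |u|+c)`. -/
def lamKES (γ : ℝ) (q : EulerState) : Fin 4 → ℝ :=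
  ![|uvel q| + cSound γ q, |uvel q|, |uvel q|, |uvel q| + cSound γ q]
/-- Local Mach number `M = |v|/c`. -/
def machNum (γ : ℝ) (q : EulerState) : ℝ :=
  Real.sqrt (uvel q ^ 2 + vvel q ^ 2) / cSound γ q
/-- Rescaled speed of sound `c̃ = c max(min(M,1), M_cut)`. -/
def cTilde (γ Mcut : ℝ) (q : EulerState) : ℝ :=
  cSound γ q * max (min (machNum γ q) 1) Mcut
/-- Low Mach Roe eigenvalues `(|u-c̃|, |u|, |u|, |u+c̃|)`. -/
def lamRoeLM (γ Mcut : ℝ) (q : EulerState) : Fin 4 → ℝ :=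
  ![|uvel q - cTilde γ Mcut q|, |uvel q|, |uvel q|, |uvel q + cTilde γ Mcut q|]
/-- Low Mach KES eigenvalues `(|u|+c̃, |u|, |u|, |u|+c̃)`. -/
def lamKESLM (γ Mcut : ℝ) (q : EulerState) : Fin 4 → ℝ :=
  ![|uvel q| + cTilde γ Mcut q, |uvel q|, |uvel q|, |uvel q| + cTilde γ Mcut q]


/-! ### Auxiliary lemmas for strict convexity of the entropy -/

private lemma combo_pos' {u v a b : ℝ} (hu : 0 < u) (hv : 0 < v) (ha : 0 ≤ a) (hb : 0 ≤ b)
    (hab : a + b = 1) : 0 < a * u + b * v := by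
  rcases eq_or_lt_of_le ha with h | h
  · have hb1 : b = 1 := by linarith
    rw [← h, hb1]; simpa using hv
  · exact add_pos_of_pos_of_nonneg (mul_pos h hu) (mul_nonneg hb hv.le)

private lemma qol' {m1 m2 r1 r2 a b : ℝ} (h1 : 0 < r1) (h2 : 0 < r2) (ha : 0 ≤ a) (hb : 0 ≤ b)
    (hab : a + b = 1) :
    (a * m1 + b * m2) ^ 2 / (a * r1 + b * r2) ≤ a * (m1 ^ 2 / r1) + b * (m2 ^ 2 / r2) := by
  have hP : 0 < a * r1 + b * r2 := combo_pos' h1 h2 ha hb hab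
  rw [div_le_iff₀ hP]
  have key : (a * (m1 ^ 2 / r1) + b * (m2 ^ 2 / r2)) * (a * r1 + b * r2)
      - (a * m1 + b * m2) ^ 2 = a * b * (m1 * r2 - m2 * r1) ^ 2 / (r1 * r2) := by
    field_simp
    ring
  have h0 : 0 ≤ a * b * (m1 * r2 - m2 * r1) ^ 2 / (r1 * r2) :=
    div_nonneg (mul_nonneg (mul_nonneg ha hb) (sq_nonneg _)) (mul_pos h1 h2).le
  linarith

private lemma sq_combo_le' {m1 m2 a b : ℝ} (ha : 0 ≤ a) (hb : 0 ≤ b) (hab : a + b = 1) :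
    (a * m1 + b * m2) ^ 2 ≤ a * m1 ^ 2 + b * m2 ^ 2 := by
  have iden : a * m1 ^ 2 + b * m2 ^ 2 - (a * m1 + b * m2) ^ 2 = a * b * (m1 - m2) ^ 2 := by
    have hb' : b = 1 - a := by linarith
    rw [hb']; ring
  nlinarith [mul_nonneg (mul_nonneg ha hb) (sq_nonneg (m1 - m2))]

private lemma sq_combo_lt' {m1 m2 a b : ℝ} (hne : m1 ≠ m2) (ha : 0 < a) (hb : 0 < b)
    (hab : a + b = 1) : (a * m1 + b * m2) ^ 2 < a * m1 ^ 2 + b * m2 ^ 2 := by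
  have hsq : 0 < (m1 - m2) ^ 2 :=
    lt_of_le_of_ne (sq_nonneg _) (Ne.symm (pow_ne_zero 2 (sub_ne_zero.2 hne)))
  have iden : a * m1 ^ 2 + b * m2 ^ 2 - (a * m1 + b * m2) ^ 2 = a * b * (m1 - m2) ^ 2 := by
    have hb' : b = 1 - a := by linarith
    rw [hb']; ring
  nlinarith [mul_pos (mul_pos ha hb) hsq]

private lemma pres_concave' {γ : ℝ} (hγ : 1 < γ) {x y : EulerState}
    (hx : 0 < rho x) (hy : 0 < rho y) {a b : ℝ} (ha : 0 ≤ a) (hb : 0 ≤ b) (hab : a + b = 1) :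
    a * pres γ x + b * pres γ y ≤ pres γ (a • x + b • y) := by
  have q1 := qol' (m1 := x 1) (m2 := y 1) (r1 := x 0) (r2 := y 0) hx hy ha hb hab
  have q2 := qol' (m1 := x 2) (m2 := y 2) (r1 := x 0) (r2 := y 0) hx hy ha hb hab
  have kin : ((a * x 1 + b * y 1) ^ 2 + (a * x 2 + b * y 2) ^ 2) / (2 * (a * x 0 + b * y 0))
      ≤ a * ((x 1 ^ 2 + x 2 ^ 2) / (2 * x 0)) + b * ((y 1 ^ 2 + y 2 ^ 2) / (2 * y 0)) := by
    have l1 : ((a * x 1 + b * y 1) ^ 2 + (a * x 2 + b * y 2) ^ 2) / (2 * (a * x 0 + b * y 0))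
        = ((a * x 1 + b * y 1) ^ 2 / (a * x 0 + b * y 0)
          + (a * x 2 + b * y 2) ^ 2 / (a * x 0 + b * y 0)) / 2 := by
      rw [← add_div, div_div, mul_comm (a * x 0 + b * y 0) 2]
    have l2 : a * ((x 1 ^ 2 + x 2 ^ 2) / (2 * x 0))
        = (a * (x 1 ^ 2 / x 0) + a * (x 2 ^ 2 / x 0)) / 2 := by ring
    have l3 : b * ((y 1 ^ 2 + y 2 ^ 2) / (2 * y 0))
        = (b * (y 1 ^ 2 / y 0) + b * (y 2 ^ 2 / y 0)) / 2 := by ring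
    rw [l1, l2, l3]
    linarith
  calc a * pres γ x + b * pres γ y
      = (γ - 1) * ((a * x 3 + b * y 3)
          - (a * ((x 1 ^ 2 + x 2 ^ 2) / (2 * x 0)) + b * ((y 1 ^ 2 + y 2 ^ 2) / (2 * y 0)))) := by
        unfold pres toten mom1 mom2 rho; ring
    _ ≤ (γ - 1) * ((a * x 3 + b * y 3)
          - ((a * x 1 + b * y 1) ^ 2 + (a * x 2 + b * y 2) ^ 2) / (2 * (a * x 0 + b * y 0))) := by
        apply mul_le_mul_of_nonneg_left _ (by linarith)
        linarith
    _ = pres γ (a • x + b • y) := by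
        unfold pres toten mom1 mom2 rho
        simp only [Pi.add_apply, Pi.smul_apply, smul_eq_mul]

private lemma pres_concave_strict' {γ : ℝ} (hγ : 1 < γ) {x y : EulerState}
    (hx : 0 < rho x) (hρ : x 0 = y 0) (hm : x 1 ≠ y 1 ∨ x 2 ≠ y 2)
    {a b : ℝ} (ha : 0 < a) (hb : 0 < b) (hab : a + b = 1) :
    a * pres γ x + b * pres γ y < pres γ (a • x + b • y) := by
  have hx0 : (0:ℝ) < x 0 := hx
  have hnum : (a * x 1 + b * y 1) ^ 2 + (a * x 2 + b * y 2) ^ 2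
      < a * (x 1 ^ 2 + x 2 ^ 2) + b * (y 1 ^ 2 + y 2 ^ 2) := by
    rcases hm with h | h
    · have s := sq_combo_lt' (m1 := x 1) (m2 := y 1) h ha hb hab
      have t := sq_combo_le' (m1 := x 2) (m2 := y 2) ha.le hb.le hab
      linarith
    · have s := sq_combo_lt' (m1 := x 2) (m2 := y 2) h ha hb hab
      have t := sq_combo_le' (m1 := x 1) (m2 := y 1) ha.le hb.le hab
      linarith
  have hdiv : ((a * x 1 + b * y 1) ^ 2 + (a * x 2 + b * y 2) ^ 2) / (2 * x 0)
      < (a * (x 1 ^ 2 + x 2 ^ 2) + b * (y 1 ^ 2 + y 2 ^ 2)) / (2 * x 0) :=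
    (div_lt_div_iff_of_pos_right (by linarith)).2 hnum
  calc a * pres γ x + b * pres γ y
      = (γ - 1) * ((a * x 3 + b * y 3)
          - (a * (x 1 ^ 2 + x 2 ^ 2) + b * (y 1 ^ 2 + y 2 ^ 2)) / (2 * x 0)) := by
        unfold pres toten mom1 mom2 rho
        rw [← hρ]; ring
    _ < (γ - 1) * ((a * x 3 + b * y 3)
          - ((a * x 1 + b * y 1) ^ 2 + (a * x 2 + b * y 2) ^ 2) / (2 * x 0)) := by
        apply mul_lt_mul_of_pos_left _ (by linarith)
        linarith
    _ = pres γ (a • x + b • y) := by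
        unfold pres toten mom1 mom2 rho
        simp only [Pi.add_apply, Pi.smul_apply, smul_eq_mul]
        rw [← hρ]
        have hb' : b = 1 - a := by linarith
        rw [hb']; ring

private lemma persp_le' {r1 r2 p1 p2 a b : ℝ} (hr1 : 0 < r1) (hr2 : 0 < r2)
    (hp1 : 0 < p1) (hp2 : 0 < p2) (ha : 0 < a) (hb : 0 < b) (hab : a + b = 1) :
    (a * r1 + b * r2) * Real.log ((a * r1 + b * r2) / (a * p1 + b * p2))
      ≤ a * (r1 * Real.log (r1 / p1)) + b * (r2 * Real.log (r2 / p2)) := by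
  have hP : 0 < a * p1 + b * p2 := combo_pos' hp1 hp2 ha.le hb.le hab
  have hw1 : (0:ℝ) ≤ a * p1 / (a * p1 + b * p2) := div_nonneg (mul_pos ha hp1).le hP.le
  have hw2 : (0:ℝ) ≤ b * p2 / (a * p1 + b * p2) := div_nonneg (mul_pos hb hp2).le hP.le
  have hsum : a * p1 / (a * p1 + b * p2) + b * p2 / (a * p1 + b * p2) = 1 := by
    rw [← add_div, div_self hP.ne']
  have hkey : (a * p1 / (a * p1 + b * p2)) * (r1 / p1) + (b * p2 / (a * p1 + b * p2)) * (r2 / p2)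
      = (a * r1 + b * r2) / (a * p1 + b * p2) := by
    field_simp
  have h := Real.convexOn_mul_log.2 (Set.mem_Ici.mpr (div_pos hr1 hp1).le)
    (Set.mem_Ici.mpr (div_pos hr2 hp2).le) hw1 hw2 hsum
  simp only [smul_eq_mul] at h
  rw [hkey] at h
  have h' := mul_le_mul_of_nonneg_left h hP.le
  have e0 : (a * p1 + b * p2) * ((a * r1 + b * r2) / (a * p1 + b * p2)
        * Real.log ((a * r1 + b * r2) / (a * p1 + b * p2)))
      = (a * r1 + b * r2) * Real.log ((a * r1 + b * r2) / (a * p1 + b * p2)) := by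
    field_simp
  have e1 : (a * p1 + b * p2) * (a * p1 / (a * p1 + b * p2) * (r1 / p1 * Real.log (r1 / p1))
        + b * p2 / (a * p1 + b * p2) * (r2 / p2 * Real.log (r2 / p2)))
      = a * (r1 * Real.log (r1 / p1)) + b * (r2 * Real.log (r2 / p2)) := by
    field_simp
  rw [e0, e1] at h'
  exact h'

private lemma persp_lt' {r1 r2 p1 p2 a b : ℝ} (hr1 : 0 < r1) (hr2 : 0 < r2)
    (hp1 : 0 < p1) (hp2 : 0 < p2) (hne : r1 / p1 ≠ r2 / p2)
    (ha : 0 < a) (hb : 0 < b) (hab : a + b = 1) :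
    (a * r1 + b * r2) * Real.log ((a * r1 + b * r2) / (a * p1 + b * p2))
      < a * (r1 * Real.log (r1 / p1)) + b * (r2 * Real.log (r2 / p2)) := by
  have hP : 0 < a * p1 + b * p2 := combo_pos' hp1 hp2 ha.le hb.le hab
  have hw1 : (0:ℝ) < a * p1 / (a * p1 + b * p2) := div_pos (mul_pos ha hp1) hP
  have hw2 : (0:ℝ) < b * p2 / (a * p1 + b * p2) := div_pos (mul_pos hb hp2) hP
  have hsum : a * p1 / (a * p1 + b * p2) + b * p2 / (a * p1 + b * p2) = 1 := by
    rw [← add_div, div_self hP.ne']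
  have hkey : (a * p1 / (a * p1 + b * p2)) * (r1 / p1) + (b * p2 / (a * p1 + b * p2)) * (r2 / p2)
      = (a * r1 + b * r2) / (a * p1 + b * p2) := by
    field_simp
  have h := Real.strictConvexOn_mul_log.2 (Set.mem_Ici.mpr (div_pos hr1 hp1).le)
    (Set.mem_Ici.mpr (div_pos hr2 hp2).le) hne hw1 hw2 hsum
  simp only [smul_eq_mul] at h
  rw [hkey] at h
  have h' := mul_lt_mul_of_pos_left h hP
  have e0 : (a * p1 + b * p2) * ((a * r1 + b * r2) / (a * p1 + b * p2)
        * Real.log ((a * r1 + b * r2) / (a * p1 + b * p2)))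
      = (a * r1 + b * r2) * Real.log ((a * r1 + b * r2) / (a * p1 + b * p2)) := by
    field_simp
  have e1 : (a * p1 + b * p2) * (a * p1 / (a * p1 + b * p2) * (r1 / p1 * Real.log (r1 / p1))
        + b * p2 / (a * p1 + b * p2) * (r2 / p2 * Real.log (r2 / p2)))
      = a * (r1 * Real.log (r1 / p1)) + b * (r2 * Real.log (r2 / p2)) := by
    field_simp
  rw [e0, e1] at h'
  exact h'

private lemma entU_eq' {γ : ℝ} (hγ : 1 < γ) {q : EulerState} (hq : admissible γ q) :
    entU γ q = (rho q * Real.log (rho q / pres γ q)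
      + (γ - 1) * (rho q * Real.log (rho q))) / (γ - 1) := by
  obtain ⟨hρ, hp⟩ := hq
  unfold entU entS
  rw [Real.log_mul hp.ne' (Real.rpow_pos_of_pos hρ _).ne', Real.log_rpow hρ,
    Real.log_div hρ.ne' hp.ne']
  ring

/-- The entropy function `U` is strictly convex on the open set of
admissible states of the 2D compressible Euler equations. -/
theorem entropy_strictConvexOn (γ : ℝ) (hγ : 1 < γ) :
    StrictConvexOn ℝ {q : EulerState | admissible γ q} (entU γ) := by
  have hγ1 : (0:ℝ) < γ - 1 := by linarith
  have hconv : Convex ℝ {q : EulerState | admissible γ q} := by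
    intro x hx y hy a b ha hb hab
    obtain ⟨hρx, hpx⟩ := hx
    obtain ⟨hρy, hpy⟩ := hy
    refine ⟨?_, ?_⟩
    · show 0 < rho (a • x + b • y)
      have hz : rho (a • x + b • y) = a * rho x + b * rho y := by
        unfold rho; simp
      rw [hz]
      exact combo_pos' hρx hρy ha hb hab
    · exact lt_of_lt_of_le (combo_pos' hpx hpy ha hb hab)
        (pres_concave' hγ hρx hρy ha hb hab)
  refine ⟨hconv, ?_⟩
  intro x hx y hy hxy a b ha hb hab
  obtain ⟨hρx, hpx⟩ := hx
  obtain ⟨hρy, hpy⟩ := hy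
  have hzadm : admissible γ (a • x + b • y) :=
    hconv ⟨hρx, hpx⟩ ⟨hρy, hpy⟩ ha.le hb.le hab
  obtain ⟨hρz, hpz⟩ := hzadm
  have hρzval : rho (a • x + b • y) = a * rho x + b * rho y := by
    unfold rho; simp
  have hP : 0 < a * pres γ x + b * pres γ y := combo_pos' hpx hpy ha.le hb.le hab
  have hPle : a * pres γ x + b * pres γ y ≤ pres γ (a • x + b • y) :=
    pres_concave' hγ hρx hρy ha.le hb.le hab
  -- step 3 : convexity of ρ log ρ, scaled by γ-1
  have h3 := Real.convexOn_mul_log.2 (Set.mem_Ici.mpr hρx.le) (Set.mem_Ici.mpr hρy.le)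
    ha.le hb.le hab
  simp only [smul_eq_mul] at h3
  have step3 : (γ - 1) * (rho (a • x + b • y) * Real.log (rho (a • x + b • y)))
      ≤ (γ - 1) * (a * (rho x * Real.log (rho x)) + b * (rho y * Real.log (rho y))) := by
    apply mul_le_mul_of_nonneg_left _ hγ1.le
    rw [hρzval]
    exact h3
  -- step 2 : perspective convexity
  have step2 : rho (a • x + b • y)
        * Real.log (rho (a • x + b • y) / (a * pres γ x + b * pres γ y))
      ≤ a * (rho x * Real.log (rho x / pres γ x))
        + b * (rho y * Real.log (rho y / pres γ y)) := by
    rw [hρzval]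
    exact persp_le' hρx hρy hpx hpy ha hb hab
  -- step 1 : monotonicity in the pressure
  have step1 : rho (a • x + b • y)
        * Real.log (rho (a • x + b • y) / pres γ (a • x + b • y))
      ≤ rho (a • x + b • y)
        * Real.log (rho (a • x + b • y) / (a * pres γ x + b * pres γ y)) := by
    apply mul_le_mul_of_nonneg_left _ hρz.le
    apply Real.log_le_log (div_pos hρz hpz)
    rw [div_eq_mul_inv, div_eq_mul_inv]
    exact mul_le_mul_of_nonneg_left (inv_anti₀ hP hPle) hρz.le
  -- the key strict inequality on the numerators
  have key : rho (a • x + b • y) * Real.log (rho (a • x + b • y) / pres γ (a • x + b • y))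
        + (γ - 1) * (rho (a • x + b • y) * Real.log (rho (a • x + b • y)))
      < a * (rho x * Real.log (rho x / pres γ x) + (γ - 1) * (rho x * Real.log (rho x)))
        + b * (rho y * Real.log (rho y / pres γ y) + (γ - 1) * (rho y * Real.log (rho y))) := by
    by_cases hρeq : rho x = rho y
    · have hρeq' : x 0 = y 0 := hρeq
      by_cases hm1 : x 1 = y 1
      · by_cases hm2 : x 2 = y 2
        · -- the energies differ, hence the pressures differ : step 2 is strict
          have hE : x 3 ≠ y 3 := by
            obtain ⟨i, hi⟩ := Function.ne_iff.mp hxy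
            fin_cases i
            · exact absurd hρeq' hi
            · exact absurd hm1 hi
            · exact absurd hm2 hi
            · exact hi
          have hpne : pres γ x ≠ pres γ y := by
            unfold pres toten mom1 mom2 rho
            rw [hρeq', hm1, hm2]
            intro h
            exact hE (by
              have h2 := mul_left_cancel₀ (show γ - 1 ≠ 0 by linarith) h
              linarith)
          have hrat : rho x / pres γ x ≠ rho y / pres γ y := by
            intro h
            apply hpne
            rw [div_eq_div_iff hpx.ne' hpy.ne'] at h
            rw [hρeq] at h
            exact (mul_left_cancel₀ hρy.ne' h).symm
          have step2' := persp_lt' hρx hρy hpx hpy hrat ha hb hab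
          rw [← hρzval] at step2'
          linarith
        · -- the momenta differ : step 1 is strict
          have hPlt : a * pres γ x + b * pres γ y < pres γ (a • x + b • y) :=
            pres_concave_strict' hγ hρx hρeq' (Or.inr hm2) ha hb hab
          have step1' : rho (a • x + b • y)
                * Real.log (rho (a • x + b • y) / pres γ (a • x + b • y))
              < rho (a • x + b • y)
                * Real.log (rho (a • x + b • y) / (a * pres γ x + b * pres γ y)) := by
            apply mul_lt_mul_of_pos_left _ hρz
            apply Real.log_lt_log (div_pos hρz hpz)
            rw [div_eq_mul_inv, div_eq_mul_inv]
            exact mul_lt_mul_of_pos_left (inv_strictAnti₀ hP hPlt) hρz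
          linarith
      · have hPlt : a * pres γ x + b * pres γ y < pres γ (a • x + b • y) :=
          pres_concave_strict' hγ hρx hρeq' (Or.inl hm1) ha hb hab
        have step1' : rho (a • x + b • y)
              * Real.log (rho (a • x + b • y) / pres γ (a • x + b • y))
            < rho (a • x + b • y)
              * Real.log (rho (a • x + b • y) / (a * pres γ x + b * pres γ y)) := by
          apply mul_lt_mul_of_pos_left _ hρz
          apply Real.log_lt_log (div_pos hρz hpz)
          rw [div_eq_mul_inv, div_eq_mul_inv]
          exact mul_lt_mul_of_pos_left (inv_strictAnti₀ hP hPlt) hρz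
        linarith
    · -- the densities differ : step 3 is strict
      have h3' := Real.strictConvexOn_mul_log.2 (Set.mem_Ici.mpr hρx.le)
        (Set.mem_Ici.mpr hρy.le) hρeq ha hb hab
      simp only [smul_eq_mul] at h3'
      have step3' : (γ - 1) * (rho (a • x + b • y) * Real.log (rho (a • x + b • y)))
          < (γ - 1) * (a * (rho x * Real.log (rho x)) + b * (rho y * Real.log (rho y))) := by
        apply mul_lt_mul_of_pos_left _ hγ1
        rw [hρzval]
        exact h3'
      linarith
  rw [entU_eq' hγ ⟨hρz, hpz⟩, entU_eq' hγ ⟨hρx, hpx⟩, entU_eq' hγ ⟨hρy, hpy⟩,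
    smul_eq_mul, smul_eq_mul,
    show a * ((rho x * Real.log (rho x / pres γ x)
          + (γ - 1) * (rho x * Real.log (rho x))) / (γ - 1))
        + b * ((rho y * Real.log (rho y / pres γ y)
          + (γ - 1) * (rho y * Real.log (rho y))) / (γ - 1))
      = (a * (rho x * Real.log (rho x / pres γ x) + (γ - 1) * (rho x * Real.log (rho x)))
        + b * (rho y * Real.log (rho y / pres γ y)
          + (γ - 1) * (rho y * Real.log (rho y)))) / (γ - 1) from by ring]
  exact (div_lt_div_iff_of_pos_right hγ1).2 key
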